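/- Let μ be an infinite regular cardinal, and endow the set of ordinals less than μ with the initial interval topology, whose open sets are exactly the intervals [0,α) for α ≤ μ. Then a topological space X fails to be [μ,μ]-compact if and only if there exists a continuous surjective function f : X → (μ, iit). -/

import Mathlib

universe u v

open Cardinal

/-- `X` is `[μ,λ]`-compact: every open cover of cardinality at most `lam` has a
subcover of cardinality strictly less than `μ`. -/
def IntervalCompact (μ lam : Cardinal.{u}) (X : Type u) [TopologicalSpace X] : Prop :=
  ∀ 𝒰 : Set (Set X), #𝒰 ≤ lam → (∀ U ∈ 𝒰, IsOpen U) → ⋃₀ 𝒰 = Set.univ →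
    ∃ 𝒱 ⊆ 𝒰, #𝒱 < μ ∧ ⋃₀ 𝒱 = Set.univ

theorem stmt_10 (μ : Cardinal.{u})
    -- `μ` is an infinite regular cardinal
    (hreg : μ.IsRegular)
    -- `t` is the initial interval topology on the set of ordinals below `μ`:
    -- its open sets are exactly the intervals `[0, α)` for `α ≤ μ`
    (t : TopologicalSpace ↥(Set.Iio μ.ord))
    (ht : ∀ S : Set ↥(Set.Iio μ.ord),
      @IsOpen _ t S ↔ ∃ α ≤ μ.ord, S = {β | (β : Ordinal) < α})
    (X : Type u) [tX : TopologicalSpace X] :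
    -- `X` fails to be `[μ,μ]`-compact iff there is a continuous surjection
    -- from `X` onto `(μ, iit)`
    ¬ IntervalCompact μ μ X ↔
      ∃ f : X → ↥(Set.Iio μ.ord),
        @Continuous X ↥(Set.Iio μ.ord) tX t f ∧ Function.Surjective f := by
  constructor
  · -- Forward direction
    intro hnc
    rw [IntervalCompact] at hnc
    push_neg at hnc
    obtain ⟨𝒰, hcard, hopen, hcover, hns⟩ := hnc
    -- `𝒰` is nonempty
    have h𝒰ne : 𝒰.Nonempty := by
      rcases Set.eq_empty_or_nonempty 𝒰 with h | h
      · exfalso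
        apply hns ∅ (Set.empty_subset 𝒰)
        · simpa using hreg.pos
        · rw [← h, hcover]
      · exact h
    have : Nonempty ↥𝒰 := h𝒰ne.to_subtype
    -- get a surjective enumeration of `𝒰` by the ordinals below `μ.ord`
    have hle : Cardinal.lift.{u + 1} #↥𝒰 ≤ Cardinal.lift.{u} #↥(Set.Iio μ.ord) := by
      rw [Ordinal.mk_Iio_ordinal, Cardinal.lift_lift, Cardinal.card_ord]
      exact Cardinal.lift_le.mpr hcard
    obtain ⟨j⟩ := Cardinal.lift_mk_le'.mp hle
    haveI hwo : IsWellOrder μ.ord.ToType ((· < ·) : μ.ord.ToType → μ.ord.ToType → Prop) :=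
      isWellOrder_lt
    set e := Ordinal.ToType.mk (o := μ.ord) with he
    let uu : ↥(Set.Iio μ.ord) → ↥𝒰 := Function.invFun j
    have husurj : Function.Surjective uu := Function.invFun_surjective j.injective
    -- the indexed cover
    let U : Ordinal.{u} → Set X := fun β => if h : β < μ.ord then (uu ⟨β, h⟩ : Set X) else ∅
    have hUmem : ∀ β (h : β < μ.ord), U β ∈ 𝒰 := by
      intro β h
      simp only [U, dif_pos h]
      exact (uu ⟨β, h⟩).2
    have hUopen : ∀ β, IsOpen (U β) := by
      intro β
      by_cases h : β < μ.ord
      · exact hopen _ (hUmem β h)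
      · simp only [U, dif_neg h]; exact isOpen_empty
    have hexists : ∀ x : X, ∃ β, x ∈ U β := by
      intro x
      have : x ∈ ⋃₀ 𝒰 := by rw [hcover]; trivial
      obtain ⟨V, hV, hxV⟩ := this
      obtain ⟨γ, hγ⟩ := husurj ⟨V, hV⟩
      refine ⟨γ.1, ?_⟩
      have h' : U γ.1 = (uu γ : Set X) := by
        simp only [U, Subtype.coe_eta]
        exact dif_pos γ.2
      rw [h', hγ]
      exact hxV
    -- least index function
    let ix : X → Ordinal.{u} := fun x => sInf {β | x ∈ U β}
    have hixmem : ∀ x, x ∈ U (ix x) := fun x => csInf_mem (hexists x)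
    have hixle : ∀ x β, x ∈ U β → ix x ≤ β := fun x β h => csInf_le (OrderBot.bddBelow _) h
    have hixlt : ∀ x, ix x < μ.ord := by
      intro x
      by_contra h
      have := hixmem x
      simp only [U, dif_neg h] at this
      exact this
    -- transfer to `μ.ord.ToType` to keep everything in `Type u`
    let ix' : X → μ.ord.ToType := fun x => e ⟨ix x, hixlt x⟩
    let R : Set μ.ord.ToType := Set.range ix'
    haveI : IsWellOrder (Subtype R) (Subrel ((· < ·) : μ.ord.ToType → μ.ord.ToType → Prop) R) :=
      inferInstanceAs (IsWellOrder _ (Subrel ((· < ·) : μ.ord.ToType → μ.ord.ToType → Prop) (· ∈ R)))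
    haveI : IsWellOrder { x // x ∈ R } (Subrel ((· < ·) : μ.ord.ToType → μ.ord.ToType → Prop) R) :=
      inferInstanceAs (IsWellOrder _ (Subrel ((· < ·) : μ.ord.ToType → μ.ord.ToType → Prop) (· ∈ R)))
    -- R is unbounded
    have hub : Set.Unbounded (· < ·) R := by
      intro a
      set γ : ↥(Set.Iio μ.ord) := e.symm a with hγ
      let v : ↥(Set.Iio (γ : Ordinal)) → Set X := fun β => U β.1
      have h𝒱sub : Set.range v ⊆ 𝒰 := by
        rintro _ ⟨β, rfl⟩
        exact hUmem β.1 (β.2.trans γ.2)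
      have h𝒱card : #↥(Set.range v) < μ := by
        have h1 : Cardinal.lift.{u + 1} #↥(Set.range v) ≤
            Cardinal.lift.{u} #↥(Set.Iio (γ : Ordinal)) := Cardinal.mk_range_le_lift
        rw [Ordinal.mk_Iio_ordinal, Cardinal.lift_lift] at h1
        have h2 : #↥(Set.range v) ≤ (γ : Ordinal).card := Cardinal.lift_le.mp h1
        exact h2.trans_lt (Cardinal.lt_ord.mp γ.2)
      have hne := hns (Set.range v) h𝒱sub h𝒱card
      obtain ⟨x, hx⟩ := (Set.ne_univ_iff_exists_notMem _).mp hne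
      have hγle : γ ≤ ⟨ix x, hixlt x⟩ := by
        by_contra h
        push_neg at h
        have hlt : ix x < (γ : Ordinal) := h
        exact hx ⟨v ⟨ix x, hlt⟩, Set.mem_range_self _, hixmem x⟩
      refine ⟨ix' x, Set.mem_range_self x, ?_⟩
      rw [not_lt]
      have : e γ ≤ e ⟨ix x, hixlt x⟩ := e.le_iff_le.mpr hγle
      rwa [hγ, OrderIso.apply_symm_apply] at this
    -- order type of R is exactly μ.ord
    have htype : Ordinal.type (Subrel ((· < ·) : μ.ord.ToType → μ.ord.ToType → Prop) R)
        = μ.ord := by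
      apply le_antisymm
      · calc Ordinal.type (Subrel ((· < ·) : μ.ord.ToType → μ.ord.ToType → Prop) R)
            ≤ Ordinal.type ((· < ·) : μ.ord.ToType → μ.ord.ToType → Prop) :=
              (Subrel.relEmbedding _ _).ordinal_type_le
          _ = μ.ord := Ordinal.type_toType _
      · rw [Cardinal.ord_le, Ordinal.card_type]
        have := Ordinal.cof_type_le (s := R) (fun a => let ⟨b, hb, h⟩ := hub a; ⟨b, hb, not_lt.mp h⟩)
        rwa [Ordinal.cof_toType, hreg.cof_eq] at this
    -- the collapsing map
    let g : X → ↥(Set.Iio μ.ord) := fun x =>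
      ⟨Ordinal.typein (Subrel ((· < ·) : μ.ord.ToType → μ.ord.ToType → Prop) R)
          ⟨ix' x, Set.mem_range_self x⟩,
        Set.mem_Iio.mpr (lt_of_lt_of_eq (Ordinal.typein_lt_type _ _) htype)⟩
    refine ⟨g, ?_, ?_⟩
    · -- continuity
      rw [continuous_def]
      intro S hS
      obtain ⟨α, hα, hSeq⟩ := (ht S).1 hS
      have hS' : S = {β : ↥(Set.Iio μ.ord) | (β : Ordinal) < α} := by
        ext β
        constructor
        · intro h
          have hmem : (β : Ordinal) ∈ Subtype.val '' S := ⟨β, h, rfl⟩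
          rw [hSeq] at hmem
          exact hmem
        · intro h
          have hmem : (β : Ordinal) ∈ Subtype.val '' S := by rw [hSeq]; exact h
          obtain ⟨β', hβ', hval⟩ := hmem
          have hββ : β' = β := Subtype.ext hval
          rw [← hββ]
          exact hβ'
      subst hS'
      rcases eq_or_lt_of_le hα with rfl | hαlt
      · have : g ⁻¹' {β : ↥(Set.Iio μ.ord) | (β : Ordinal) < μ.ord} = Set.univ :=
          Set.eq_univ_of_forall fun x => (g x).2
        rw [this]; exact isOpen_univ
      · obtain ⟨a, ha⟩ := Ordinal.typein_surj
          (Subrel ((· < ·) : μ.ord.ToType → μ.ord.ToType → Prop) R) (htype ▸ hαlt)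
        have hkey : g ⁻¹' {β : ↥(Set.Iio μ.ord) | (β : Ordinal) < α}
            = ⋃ β ∈ Set.Iio ((e.symm a.1 : ↥(Set.Iio μ.ord)) : Ordinal), U β := by
          ext x
          simp only [Set.mem_preimage, Set.mem_setOf_eq, Set.mem_iUnion, Set.mem_Iio,
            exists_prop]
          have hchain : (g x : Ordinal) < α ↔ ix x < ((e.symm a.1 : ↥(Set.Iio μ.ord)) : Ordinal) := by
            rw [← ha]
            rw [show ((g x : Ordinal)) = Ordinal.typein
              (Subrel ((· < ·) : μ.ord.ToType → μ.ord.ToType → Prop) R)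
              ⟨ix' x, Set.mem_range_self x⟩ from rfl]
            rw [Ordinal.typein_lt_typein]
            have h1 : (Subrel ((· < ·) : μ.ord.ToType → μ.ord.ToType → Prop) R)
                ⟨ix' x, Set.mem_range_self x⟩ a ↔ ix' x < a.1 := Iff.rfl
            rw [h1]
            constructor
            · intro h
              have := e.symm.lt_iff_lt.mpr h
              rwa [show e.symm (ix' x) = ⟨ix x, hixlt x⟩ from e.symm_apply_apply _] at this
            · intro h
              have h2 : (⟨ix x, hixlt x⟩ : ↥(Set.Iio μ.ord)) < e.symm a.1 := h
              have := e.lt_iff_lt.mpr h2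
              rwa [OrderIso.apply_symm_apply] at this
          rw [hchain]
          constructor
          · intro h
            exact ⟨ix x, h, hixmem x⟩
          · rintro ⟨β, hβ, hxβ⟩
            exact (hixle x β hxβ).trans_lt hβ
        rw [hkey]
        exact isOpen_biUnion fun β _ => hUopen β
    · -- surjectivity
      intro β
      have hβ : (β : Ordinal) < Ordinal.type
          (Subrel ((· < ·) : μ.ord.ToType → μ.ord.ToType → Prop) R) :=
        lt_of_lt_of_eq (Set.mem_Iio.mp β.2) htype.symm
      obtain ⟨a, ha⟩ := Ordinal.typein_surj _ hβ
      obtain ⟨x, hx⟩ := a.2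
      refine ⟨x, ?_⟩
      apply Subtype.ext
      show Ordinal.typein _ (⟨ix' x, Set.mem_range_self x⟩ : ↥R) = (β : Ordinal)
      rw [show (⟨ix' x, Set.mem_range_self x⟩ : ↥R) = a from Subtype.ext hx]
      exact ha
  · -- Reverse direction
    rintro ⟨f, hfc, hfs⟩ hic
    let F : ↥(Set.Iio μ.ord) → Set X := fun α => f ⁻¹' {β : ↥(Set.Iio μ.ord) | (β : Ordinal) < α}
    have hFopen : ∀ α, IsOpen (F α) := by
      intro α
      apply hfc.isOpen_preimage
      refine (ht _).2 ⟨α, le_of_lt α.2, ?_⟩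
      ext b
      simp only [Set.mem_image, Set.mem_setOf_eq]
      constructor
      · rintro ⟨β, hβ, rfl⟩; exact hβ
      · intro hb; exact ⟨⟨b, hb.trans α.2⟩, hb, rfl⟩
    have hcard : #↥(Set.range F) ≤ μ := by
      have h1 : Cardinal.lift.{u + 1} #↥(Set.range F) ≤
          Cardinal.lift.{u} #↥(Set.Iio μ.ord) := Cardinal.mk_range_le_lift
      rw [Ordinal.mk_Iio_ordinal, Cardinal.lift_lift, Cardinal.card_ord] at h1
      exact Cardinal.lift_le.mp h1
    have hcover : ⋃₀ Set.range F = Set.univ := by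
      apply Set.eq_univ_of_forall
      intro x
      have hsucc : (f x : Ordinal) + 1 < μ.ord := by
        rw [Ordinal.add_one_eq_succ]; exact (Cardinal.isSuccLimit_ord hreg.1).succ_lt (f x).2
      refine ⟨F ⟨(f x : Ordinal) + 1, hsucc⟩, Set.mem_range_self _, ?_⟩
      show (f x : Ordinal) < (f x : Ordinal) + 1
      rw [Ordinal.add_one_eq_succ]
      exact Order.lt_succ _
    obtain ⟨𝒱, h𝒱sub, h𝒱card, h𝒱cover⟩ :=
      hic (Set.range F) hcard (by rintro _ ⟨α, rfl⟩; exact hFopen α) hcover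
    -- choose an index for each member of 𝒱
    have hch : ∀ V : ↥𝒱, ∃ α : ↥(Set.Iio μ.ord), (V : Set X) = F α := by
      intro V
      obtain ⟨α, hα⟩ := h𝒱sub V.2
      exact ⟨α, hα.symm⟩
    choose idx hidx using hch
    have hsup : (⨆ V : ↥𝒱, ((idx V : Ordinal))) < μ.ord := by
      apply Ordinal.iSup_lt_ord
      · rwa [hreg.cof_eq]
      · exact fun V => (idx V).2
    set γ : Ordinal := ⨆ V : ↥𝒱, ((idx V : Ordinal)) with hγ
    obtain ⟨x, hx⟩ := hfs ⟨γ, hsup⟩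
    have hxmem : x ∈ ⋃₀ 𝒱 := by rw [h𝒱cover]; trivial
    obtain ⟨V, hV, hxV⟩ := hxmem
    have hxF : x ∈ F (idx ⟨V, hV⟩) := by
      rw [← hidx ⟨V, hV⟩]
      exact hxV
    have hlt : (f x : Ordinal) < (idx ⟨V, hV⟩ : Ordinal) := hxF
    rw [hx] at hlt
    have hle : ((idx ⟨V, hV⟩ : Ordinal)) ≤ γ := Ordinal.le_iSup _ _
    exact absurd (hlt.trans_le hle) (lt_irrefl _)
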